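/- Let Γ be a tree (finite, connected, acyclic simple graph) with any vertex chosen as sink. Then every uniformly large sandpile σ (i.e., σ ≥ d − 1 componentwise on the non-sink vertices) is immutable: its ℝ-odometer equals its ℤ-odometer, and both equal (L')^{-1}(σ − d + 1), which is an integer vector. -/

import Mathlib

open Matrix

noncomputable section

/-- A finite multigraph without self-loops: each edge `e` has a head and a tail. -/
structure Multigraph where
  V : Type
  E : Type
  fintypeV : Fintype V
  decEqV : DecidableEq V
  fintypeE : Fintype E
  decEqE : DecidableEq E
  head : E → V
  tail : E → V
  loopless : ∀ e, head e ≠ tail e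

namespace Multigraph

variable (G : Multigraph)

instance : Fintype G.V := G.fintypeV
instance : DecidableEq G.V := G.decEqV
instance : Fintype G.E := G.fintypeE
instance : DecidableEq G.E := G.decEqE

/-- `v` and `w` are joined by some edge belonging to `F`. -/
def edgeRel (F : Finset G.E) (v w : G.V) : Prop :=
  ∃ e ∈ F, (G.head e = v ∧ G.tail e = w) ∨ (G.head e = w ∧ G.tail e = v)

/-- Reachability using only edges in `F`. -/
def Reach (F : Finset G.E) : G.V → G.V → Prop :=
  Relation.EqvGen (G.edgeRel F)

/-- The multigraph is connected. -/
def Connected : Prop := ∀ v w : G.V, G.Reach Finset.univ v w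

/-- The number of edges joining `v` and `w`. -/
def edgeCount (v w : G.V) : ℕ :=
  Nat.card {e : G.E // (G.head e = v ∧ G.tail e = w) ∨ (G.head e = w ∧ G.tail e = v)}

/-- The degree of a vertex. -/
def degree (v : G.V) : ℕ :=
  Nat.card {e : G.E // G.head e = v ∨ G.tail e = v}

/-- The Laplacian matrix of the multigraph. -/
def laplacian : Matrix G.V G.V ℤ :=
  Matrix.of fun v w => if v = w then (G.degree v : ℤ) else -(G.edgeCount v w : ℤ)

/-- The reduced Laplacian: delete the row and column of the sink `s`. -/
def reducedLaplacian (s : G.V) : Matrix {v : G.V // v ≠ s} {v : G.V // v ≠ s} ℤ :=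
  Matrix.of fun v w => G.laplacian v.1 w.1

/-- A spanning tree, seen as a set of edges: it connects all vertices and has
`|V| - 1` edges. -/
def IsSpanningTree (T : Finset G.E) : Prop :=
  (∀ v w : G.V, G.Reach T v w) ∧ T.card + 1 = Fintype.card G.V

/-- The number of connected components of the spanning subgraph with edge set `F`. -/
def numComponents (F : Finset G.E) : ℕ :=
  Nat.card (Quotient (Relation.EqvGen.setoid (G.edgeRel F)))

/-- `F` is the edge set of a spanning forest: the number of connected components of
`(V, F)` equals `|V| - |F|` (i.e. `F` is acyclic). -/
def IsForest (F : Finset G.E) : Prop :=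
  G.numComponents F + F.card = Fintype.card G.V

end Multigraph
namespace Multigraph
variable (G : Multigraph)

/-- Signed incidence matrix. -/
def inc : Matrix G.V G.E ℤ :=
  Matrix.of fun v e => if G.head e = v then 1 else if G.tail e = v then -1 else 0

lemma degree_eq_sum (v : G.V) :
    (G.degree v : ℤ) = ∑ e : G.E, G.inc v e * G.inc v e := by
  rw [degree, Nat.card_eq_fintype_card, Fintype.card_subtype, Finset.card_filter]
  push_cast
  refine Finset.sum_congr rfl fun e _ => ?_
  have hl := G.loopless e
  by_cases h1 : G.head e = v <;> by_cases h2 : G.tail e = v <;>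
    simp_all [inc]

lemma edgeCount_eq_sum (v w : G.V) (hvw : v ≠ w) :
    -(G.edgeCount v w : ℤ) = ∑ e : G.E, G.inc v e * G.inc w e := by
  rw [edgeCount, Nat.card_eq_fintype_card, Fintype.card_subtype, Finset.card_filter]
  push_cast
  rw [← Finset.sum_neg_distrib]
  refine Finset.sum_congr rfl fun e _ => ?_
  have hl := G.loopless e
  by_cases h1 : G.head e = v <;> by_cases h2 : G.tail e = w <;>
    by_cases h3 : G.head e = w <;> by_cases h4 : G.tail e = v <;>
    simp_all [inc]

lemma laplacian_eq_sum (v w : G.V) :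
    G.laplacian v w = ∑ e : G.E, G.inc v e * G.inc w e := by
  by_cases h : v = w
  · subst h; simpa [laplacian] using G.degree_eq_sum v
  · simpa [laplacian, h] using G.edgeCount_eq_sum v w h

/-- Extend a vector on non-sink vertices by zero at the sink. -/
def extend {R : Type*} [Zero R] (s : G.V) (x : {v : G.V // v ≠ s} → R) : G.V → R :=
  fun v => if h : v = s then 0 else x ⟨v, h⟩

lemma sum_mul_inc {R : Type*} [CommRing R] (f : G.V → R) (e : G.E) :
    ∑ v : G.V, f v * (G.inc v e : R) = f (G.head e) - f (G.tail e) := by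
  have hl := G.loopless e
  rw [← Finset.sum_subset (Finset.subset_univ {G.head e, G.tail e})
    (fun v _ hv => ?_)]
  · rw [Finset.sum_pair hl]
    simp [inc, hl]
    ring
  · simp only [Finset.mem_insert, Finset.mem_singleton, not_or] at hv
    simp [inc, Ne.symm hv.1, Ne.symm hv.2]

lemma sum_subtype_mul_inc {R : Type*} [CommRing R] (s : G.V)
    (x : {v : G.V // v ≠ s} → R) (e : G.E) :
    ∑ w : {v : G.V // v ≠ s}, x w * (G.inc w.1 e : R)
      = G.extend s x (G.head e) - G.extend s x (G.tail e) := by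
  rw [← G.sum_mul_inc (G.extend s x) e]
  have h1 : ∀ w : {v : G.V // v ≠ s},
      x w * (G.inc w.1 e : R) = G.extend s x w.1 * (G.inc w.1 e : R) := by
    intro w; simp [extend, w.2]
  rw [Finset.sum_congr rfl (fun w _ => h1 w)]
  rw [← Finset.sum_subtype (Finset.univ.erase s)
    (fun v => by simp) (fun v => G.extend s x v * (G.inc v e : R))]
  rw [← Finset.add_sum_erase Finset.univ _ (Finset.mem_univ s)]
  simp [extend]

lemma reach_eq {α : Sort*} (F : Finset G.E) (f : G.V → α)
    (hf : ∀ e ∈ F, f (G.head e) = f (G.tail e)) :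
    ∀ v w, G.Reach F v w → f v = f w := by
  intro v w h
  induction h with
  | rel a b hab =>
    obtain ⟨e, he, hc⟩ := hab
    rcases hc with ⟨h1, h2⟩ | ⟨h1, h2⟩
    · rw [← h1, ← h2]; exact hf e he
    · rw [← h1, ← h2]; exact (hf e he).symm
  | refl => rfl
  | symm _ _ _ ih => exact ih.symm
  | trans _ _ _ _ _ ih1 ih2 => exact ih1.trans ih2

lemma mulVec_eq (s : G.V) (x : {v : G.V // v ≠ s} → ℝ) (v : {v : G.V // v ≠ s}) :
    ((G.reducedLaplacian s).map ((↑) : ℤ → ℝ)).mulVec x v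
      = ∑ e : G.E, (G.inc v.1 e : ℝ) *
          (G.extend s x (G.head e) - G.extend s x (G.tail e)) := by
  have step : ∀ w : {v : G.V // v ≠ s},
      ((G.reducedLaplacian s) v w : ℝ) * x w
        = ∑ e : G.E, (G.inc v.1 e : ℝ) * ((G.inc w.1 e : ℝ) * x w) := by
    intro w
    rw [show (G.reducedLaplacian s) v w = G.laplacian v.1 w.1 from rfl,
      G.laplacian_eq_sum]
    push_cast
    rw [Finset.sum_mul]
    exact Finset.sum_congr rfl fun e _ => by ring
  simp only [Matrix.mulVec, dotProduct, Matrix.map_apply]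
  rw [Finset.sum_congr rfl (fun w _ => step w), Finset.sum_comm]
  refine Finset.sum_congr rfl fun e _ => ?_
  rw [← Finset.mul_sum]
  congr 1
  rw [← G.sum_subtype_mul_inc s x e]
  exact Finset.sum_congr rfl fun w _ => by ring

lemma null_vec (hG : G.Connected) (s : G.V) (x : {v : G.V // v ≠ s} → ℚ)
    (h : ∀ e, ∑ w : {v : G.V // v ≠ s}, x w * (G.inc w.1 e : ℚ) = 0) : x = 0 := by
  have h2 : ∀ e ∈ (Finset.univ : Finset G.E),
      G.extend s x (G.head e) = G.extend s x (G.tail e) := by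
    intro e _
    have h3 := G.sum_subtype_mul_inc s x e
    rw [h e] at h3
    linarith
  have h3 := G.reach_eq Finset.univ _ h2
  funext v
  have h4 := h3 v.1 s (hG v.1 s)
  simpa [extend, v.2] using h4

lemma maxprin (hG : G.Connected) (s : G.V) (x : {v : G.V // v ≠ s} → ℝ)
    (hx : ∀ v, 0 ≤ ((G.reducedLaplacian s).map ((↑) : ℤ → ℝ)).mulVec x v) :
    ∀ v, 0 ≤ x v := by
  by_contra hneg
  push_neg at hneg
  obtain ⟨v₀, hv₀⟩ := hneg
  set f := G.extend s x with hf
  obtain ⟨vm, -, hvm⟩ := Finset.exists_min_image Finset.univ f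
    ⟨v₀.1, Finset.mem_univ _⟩
  set m := f vm with hm
  have hmle : ∀ v, m ≤ f v := fun v => hvm v (Finset.mem_univ v)
  have hfv₀ : f v₀.1 = x v₀ := by simp [hf, extend, v₀.2]
  have hm0 : m < 0 := lt_of_le_of_lt (hmle v₀.1) (by rw [hfv₀]; exact hv₀)
  have hfs : f s = 0 := by simp [hf, extend]
  -- if f v = m, then all neighbors of v also have value m
  have key : ∀ v : G.V, f v = m → ∀ e : G.E,
      (G.head e = v → f (G.tail e) = m) ∧ (G.tail e = v → f (G.head e) = m) := by
    intro v hv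
    have hvs : v ≠ s := by
      rintro rfl
      rw [hfs] at hv
      exact absurd hv.symm (ne_of_lt hm0)
    have h0 := hx ⟨v, hvs⟩
    rw [G.mulVec_eq] at h0
    have hterm : ∀ e ∈ (Finset.univ : Finset G.E),
        (G.inc (⟨v, hvs⟩ : {v : G.V // v ≠ s}).1 e : ℝ) *
          (f (G.head e) - f (G.tail e)) ≤ 0 := by
      intro e _
      have hl := G.loopless e
      by_cases h1 : G.head e = v
      · have : (G.inc v e : ℝ) = 1 := by simp [inc, h1]
        simp only [this]
        rw [h1, hv]
        nlinarith [hmle (G.tail e)]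
      · by_cases h2 : G.tail e = v
        · have : (G.inc v e : ℝ) = -1 := by simp [inc, h1, h2]
          simp only [this]
          rw [h2, hv]
          nlinarith [hmle (G.head e)]
        · have : (G.inc v e : ℝ) = 0 := by simp [inc, h1, h2]
          simp [this]
    have hzero := (Finset.sum_eq_zero_iff_of_nonpos hterm).mp
      (le_antisymm (Finset.sum_nonpos hterm) h0)
    intro e
    constructor
    · intro h1
      have hz := hzero e (Finset.mem_univ e)
      have : (G.inc v e : ℝ) = 1 := by simp [inc, h1]
      simp only [this, one_mul] at hz
      rw [h1, hv] at hz
      linarith [sub_eq_zero.mp hz]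
    · intro h2
      have hz := hzero e (Finset.mem_univ e)
      have h1 : ¬ G.head e = v := fun h => G.loopless e (h.trans h2.symm)
      have : (G.inc v e : ℝ) = -1 := by simp [inc, h1, h2]
      simp only [this] at hz
      rw [h2, hv] at hz
      have : f (G.head e) - m = 0 := by linarith
      linarith [this]
  -- propagate the value m from vm to the sink
  have hrel : ∀ e ∈ (Finset.univ : Finset G.E),
      (f (G.head e) = m) = (f (G.tail e) = m) := by
    intro e _
    apply propext
    constructor
    · intro hv; exact (key _ hv e).1 rfl
    · intro hv; exact (key _ hv e).2 rfl
  have h3 := G.reach_eq Finset.univ (fun v => f v = m) hrel vm s (hG vm s)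
  simp only [eq_iff_iff] at h3
  have hms : f s = m := h3.mp rfl
  rw [hfs] at hms
  exact absurd hms.symm (ne_of_lt hm0)

end Multigraph

/-- Each column has entries in `{0, 1, -1}`, with at most one `1` and at most one `-1`. -/
def ColOK {ι κ : Type*} (M : Matrix ι κ ℤ) : Prop :=
  ∀ j, (∀ i, M i j = 0 ∨ M i j = 1 ∨ M i j = -1) ∧
    (∀ i i', M i j = 1 → M i' j = 1 → i = i') ∧
    (∀ i i', M i j = -1 → M i' j = -1 → i = i')

lemma ColOK.submatrix {ι κ ι' κ' : Type*} {M : Matrix ι κ ℤ} (h : ColOK M)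
    {f : ι' → ι} (hf : Function.Injective f) (g : κ' → κ) :
    ColOK (M.submatrix f g) := fun j =>
  ⟨fun i => (h (g j)).1 (f i), fun i i' h1 h2 => hf ((h (g j)).2.1 _ _ h1 h2),
    fun i i' h1 h2 => hf ((h (g j)).2.2 _ _ h1 h2)⟩

lemma det_colOK_fin : ∀ (n : ℕ) (M : Matrix (Fin n) (Fin n) ℤ), ColOK M →
    M.det = 0 ∨ M.det = 1 ∨ M.det = -1 := by
  intro n
  induction n with
  | zero => intro M _; right; left; exact Matrix.det_fin_zero
  | succ n ih =>
    intro M hM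
    by_cases hA : ∃ j i, ∀ i', i' ≠ i → M i' j = 0
    · obtain ⟨j, i, hcol⟩ := hA
      have hsum : M.det
          = (-1 : ℤ) ^ (i + j : ℕ) * M i j * (M.submatrix i.succAbove j.succAbove).det := by
        rw [Matrix.det_succ_column M j]
        exact Finset.sum_eq_single i (fun b _ hb => by rw [hcol b hb]; ring)
          (fun h => absurd (Finset.mem_univ i) h)
      have hminor := ih _ (hM.submatrix (Fin.succAbove_right_injective (p := i)) j.succAbove)
      have hsign := neg_one_pow_eq_or ℤ (i + j : ℕ)
      have hent := (hM j).1 i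
      rw [hsum]
      rcases hsign with h1 | h1 <;> rcases hent with h2 | h2 | h2 <;>
        rcases hminor with h3 | h3 | h3 <;> simp [h1, h2, h3]
    · push_neg at hA
      have hcs : ∀ j, ∑ i, M i j = 0 := by
        intro j
        obtain ⟨i₁, -, h1⟩ := hA j 0
        obtain ⟨i₂, hne, h2⟩ := hA j i₁
        have key : ∃ a b, a ≠ b ∧ M a j = 1 ∧ M b j = -1 := by
          rcases (hM j).1 i₁ with h | h | h
          · exact absurd h h1
          · rcases (hM j).1 i₂ with h' | h' | h'
            · exact absurd h' h2
            · exact absurd ((hM j).2.1 _ _ h' h) hne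
            · exact ⟨i₁, i₂, fun hh => hne hh.symm, h, h'⟩
          · rcases (hM j).1 i₂ with h' | h' | h'
            · exact absurd h' h2
            · exact ⟨i₂, i₁, hne, h', h⟩
            · exact absurd ((hM j).2.2 _ _ h' h) hne
        obtain ⟨a, b, hab, ha, hb⟩ := key
        have hout : ∀ i ∈ (Finset.univ : Finset (Fin (n + 1))),
            i ∉ ({a, b} : Finset (Fin (n + 1))) → M i j = 0 := by
          intro i _ hi
          simp only [Finset.mem_insert, Finset.mem_singleton, not_or] at hi
          rcases (hM j).1 i with h | h | h
          · exact h
          · exact absurd ((hM j).2.1 _ _ h ha) hi.1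
          · exact absurd ((hM j).2.2 _ _ h hb) hi.2
        rw [← Finset.sum_subset (Finset.subset_univ {a, b}) hout,
          Finset.sum_pair hab, ha, hb]
        ring
      have hq : (M.map ((↑) : ℤ → ℚ)).det = 0 := by
        rw [← Matrix.exists_vecMul_eq_zero_iff]
        refine ⟨fun _ => 1, ?_, ?_⟩
        · intro h0
          have := congrFun h0 0
          simp at this
        · funext j
          have hj := hcs j
          simp only [Matrix.vecMul, dotProduct, Matrix.map_apply, one_mul, Pi.zero_apply]
          exact_mod_cast congrArg (fun z : ℤ => (z : ℚ)) hj
      left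
      have h2 : ((M.det : ℤ) : ℚ) = 0 := by
        rw [show ((M.det : ℤ) : ℚ) = (Int.castRingHom ℚ) M.det from rfl,
          RingHom.map_det]
        exact hq
      exact_mod_cast h2

lemma det_colOK {ι : Type*} [Fintype ι] [DecidableEq ι] (M : Matrix ι ι ℤ) (h : ColOK M) :
    M.det = 0 ∨ M.det = 1 ∨ M.det = -1 := by
  have := det_colOK_fin _ (M.submatrix (Fintype.equivFin ι).symm (Fintype.equivFin ι).symm)
    (h.submatrix (Fintype.equivFin ι).symm.injective _)
  rwa [Matrix.det_submatrix_equiv_self] at this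

namespace Multigraph
variable (G : Multigraph)

lemma isUnit_det_reducedLaplacian (hG : G.Connected)
    (htree : Fintype.card G.E + 1 = Fintype.card G.V) (s : G.V) :
    IsUnit (G.reducedLaplacian s).det := by
  have hcard : Fintype.card {v : G.V // v ≠ s} = Fintype.card G.E := by
    have h1 : Fintype.card {v : G.V // v ≠ s}
        = Fintype.card G.V - Fintype.card {v : G.V // v = s} :=
      Fintype.card_subtype_compl _
    rw [Fintype.card_subtype_eq] at h1
    omega
  let ι : {v : G.V // v ≠ s} ≃ G.E := Fintype.equivOfCardEq hcard
  let C : Matrix {v : G.V // v ≠ s} {v : G.V // v ≠ s} ℤ :=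
    Matrix.of fun v w => G.inc v.1 (ι w)
  have hL : G.reducedLaplacian s = C * Cᵀ := by
    ext v w
    rw [show (G.reducedLaplacian s) v w = G.laplacian v.1 w.1 from rfl,
      G.laplacian_eq_sum, Matrix.mul_apply]
    exact (Equiv.sum_comp ι fun e => G.inc v.1 e * G.inc w.1 e).symm
  have hinc : ∀ (v : G.V) (e : G.E),
      G.inc v e = 0 ∨ G.inc v e = 1 ∨ G.inc v e = -1 := by
    intro v e
    by_cases h1 : G.head e = v <;> by_cases h2 : G.tail e = v <;> simp [inc, h1, h2]
  have hcol : ColOK C := by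
    intro j
    refine ⟨fun i => hinc i.1 (ι j), fun i i' h1 h2 => ?_, fun i i' h1 h2 => ?_⟩
    · have k1 : G.head (ι j) = i.1 := by
        by_contra hk
        by_cases h2' : G.tail (ι j) = i.1 <;> simp [C, inc, hk, h2'] at h1
      have k2 : G.head (ι j) = i'.1 := by
        by_contra hk
        by_cases h2' : G.tail (ι j) = i'.1 <;> simp [C, inc, hk, h2'] at h2
      exact Subtype.ext (k1 ▸ k2)
    · have k1 : G.tail (ι j) = i.1 := by
        by_contra hk
        by_cases h1' : G.head (ι j) = i.1 <;> simp [C, inc, h1', hk] at h1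
      have k2 : G.tail (ι j) = i'.1 := by
        by_contra hk
        by_cases h1' : G.head (ι j) = i'.1 <;> simp [C, inc, h1', hk] at h2
      exact Subtype.ext (k1 ▸ k2)
  have hC0 : C.det ≠ 0 := by
    intro h0
    have hq : (C.map ((↑) : ℤ → ℚ)).det = 0 := by
      rw [show C.map ((↑) : ℤ → ℚ) = (Int.castRingHom ℚ).mapMatrix C from rfl,
        ← RingHom.map_det, h0]
      simp
    obtain ⟨x, hx0, hxm⟩ := Matrix.exists_vecMul_eq_zero_iff.mpr hq
    apply hx0
    apply G.null_vec hG s x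
    intro e
    have hx := congrFun hxm (ι.symm e)
    simpa [Matrix.vecMul, dotProduct, C, Matrix.map_apply] using hx
  have hdet : (G.reducedLaplacian s).det = C.det * C.det := by
    rw [hL, Matrix.det_mul, Matrix.det_transpose]
  rcases det_colOK C hcol with h | h | h
  · exact absurd h hC0
  · rw [hdet, h]; exact isUnit_one
  · rw [hdet, h]; norm_num

end Multigraph
/-- On a tree (connected with `|E| + 1 = |V|`, simple: at most one edge between any
two vertices), every uniformly large sandpile is immutable: `(L')⁻¹(σ - d + 1)` is
an integer vector and is simultaneously the `ℝ`-odometer and the `ℤ`-odometer of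
`σ`. -/
theorem tree_uniformly_large_immutable
    (G : Multigraph) (hG : G.Connected)
    (htree : Fintype.card G.E + 1 = Fintype.card G.V)
    (hsimple : ∀ v w : G.V, G.edgeCount v w ≤ 1)
    (s : G.V)
    (σ : {v : G.V // v ≠ s} → ℤ)
    (hσ : ∀ v : {v : G.V // v ≠ s}, (G.degree v.1 : ℤ) - 1 ≤ σ v) :
    letI A : Matrix {v : G.V // v ≠ s} {v : G.V // v ≠ s} ℝ :=
      (G.reducedLaplacian s).map ((↑) : ℤ → ℝ)
    letI u : {v : G.V // v ≠ s} → ℝ :=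
      A⁻¹.mulVec fun v => (σ v : ℝ) - (G.degree v.1 : ℝ) + 1
    (∀ v, ∃ m : ℤ, u v = (m : ℝ)) ∧
      ((∀ v, 0 ≤ u v) ∧
        (∀ v, (σ v : ℝ) - A.mulVec u v ≤ (G.degree v.1 : ℝ) - 1)) ∧
      (∀ w : {v : G.V // v ≠ s} → ℝ,
        (∀ v, 0 ≤ w v) →
        (∀ v, (σ v : ℝ) - A.mulVec w v ≤ (G.degree v.1 : ℝ) - 1) →
        ∀ v, u v ≤ w v) ∧
      (∀ w : {v : G.V // v ≠ s} → ℝ, (∀ v, ∃ m : ℤ, w v = (m : ℝ)) →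
        (∀ v, 0 ≤ w v) →
        (∀ v, (σ v : ℝ) - A.mulVec w v ≤ (G.degree v.1 : ℝ) - 1) →
        ∀ v, u v ≤ w v) := by
  set A : Matrix {v : G.V // v ≠ s} {v : G.V // v ≠ s} ℝ :=
    (G.reducedLaplacian s).map ((↑) : ℤ → ℝ) with hA
  set u : {v : G.V // v ≠ s} → ℝ :=
    A⁻¹.mulVec fun v => (σ v : ℝ) - (G.degree v.1 : ℝ) + 1 with hudef
  have hunit := G.isUnit_det_reducedLaplacian hG htree s
  have hAdet : IsUnit A.det := by
    have h1 : A.det = ((G.reducedLaplacian s).det : ℝ) := by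
      rw [hA, show (G.reducedLaplacian s).map ((↑) : ℤ → ℝ)
          = (Int.castRingHom ℝ).mapMatrix (G.reducedLaplacian s) from rfl,
        ← RingHom.map_det]
      rfl
    rw [isUnit_iff_ne_zero, h1]
    rcases Int.isUnit_iff.mp hunit with h | h <;> rw [h] <;> norm_num
  set b₀ : {v : G.V // v ≠ s} → ℤ := fun v => σ v - G.degree v.1 + 1 with hb₀def
  set u₀ : {v : G.V // v ≠ s} → ℤ := (G.reducedLaplacian s)⁻¹.mulVec b₀ with hu₀def
  have h₀ : (G.reducedLaplacian s).mulVec u₀ = b₀ := by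
    rw [hu₀def, Matrix.mulVec_mulVec, Matrix.mul_nonsing_inv _ hunit, Matrix.one_mulVec]
  have hmap : A.mulVec (fun v => (u₀ v : ℝ)) = fun v => (σ v : ℝ) - G.degree v.1 + 1 := by
    funext v
    have h1 := congrFun h₀ v
    simp only [Matrix.mulVec, dotProduct, hb₀def] at h1
    rw [hA]
    simp only [Matrix.mulVec, dotProduct, Matrix.map_apply]
    have h2 : ∑ w, ((G.reducedLaplacian s) v w : ℝ) * (u₀ w : ℝ)
        = ((∑ w, (G.reducedLaplacian s) v w * u₀ w : ℤ) : ℝ) := by push_cast; rfl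
    rw [h2, h1]
    push_cast
    ring
  have hu : u = fun v => (u₀ v : ℝ) := by
    rw [hudef, show (fun v => (σ v : ℝ) - (G.degree v.1 : ℝ) + 1)
        = A.mulVec (fun v => (u₀ v : ℝ)) from hmap.symm,
      Matrix.mulVec_mulVec, Matrix.nonsing_inv_mul _ hAdet, Matrix.one_mulVec]
  have hAu : A.mulVec u = fun v => (σ v : ℝ) - G.degree v.1 + 1 := by
    rw [hu]; exact hmap
  have claim3 : ∀ w : {v : G.V // v ≠ s} → ℝ,
      (∀ v, (σ v : ℝ) - A.mulVec w v ≤ (G.degree v.1 : ℝ) - 1) →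
      ∀ v, u v ≤ w v := by
    intro w hw v
    have hkey : ∀ v', 0 ≤ ((G.reducedLaplacian s).map ((↑) : ℤ → ℝ)).mulVec (w - u) v' := by
      intro v'
      rw [← hA, Matrix.mulVec_sub]
      have h1 := hw v'
      have h2 := congrFun hAu v'
      simp only [Pi.sub_apply] at *
      rw [h2]
      linarith
    have := G.maxprin hG s (w - u) hkey v
    simp only [Pi.sub_apply] at this
    linarith
  refine ⟨fun v => ⟨u₀ v, by rw [hu]⟩, ⟨?_, ?_⟩, fun w _ hw v => claim3 w hw v,
    fun w _ _ hw v => claim3 w hw v⟩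
  · apply G.maxprin hG s
    intro v
    rw [← hA]
    have h1 := congrFun hAu v
    rw [hA] at h1 ⊢
    rw [h1]
    have := hσ v
    have h2 : ((G.degree v.1 : ℤ) : ℝ) - 1 ≤ ((σ v : ℤ) : ℝ) := by exact_mod_cast this
    push_cast at h2 ⊢
    linarith
  · intro v
    have h1 := congrFun hAu v
    rw [h1]
    ring_nf
    linarith [le_refl ((G.degree v.1 : ℝ) - 1)]
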